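/- arXiv:1406.6988 — 3 statements merged into one kernel-verified Lean document; each statement's English description precedes it below -/
import Mathlib

section
/- For real x with |x| < 2π, the series ∑_{n=0}^∞ B_{2n} x^{2n} / (2n)! converges to x/2 + x/(e^x - 1) (where the right-hand side is extended by continuity to the value 1 at x = 0). -/
open Real

lemma bern_div_fact_bound (k : ℕ) :
    |((bernoulli (2*k) : ℚ) : ℝ)| / ((2*k).factorial : ℝ) ≤ 4 / (2*π)^(2*k) := by
  rcases Nat.eq_zero_or_pos k with rfl | hk
  · norm_num
  · have hz := hasSum_zeta_nat (k := k) hk.ne'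
    set Z : ℝ := (-1 : ℝ) ^ (k + 1) * (2:ℝ) ^ (2*k-1) * π ^ (2*k) *
      ((bernoulli (2*k) : ℚ) : ℝ) / ((2*k).factorial : ℝ) with hZ
    have hle : Z ≤ π^2/6 := by
      refine hasSum_le (fun n => ?_) hz hasSum_zeta_two
      rcases Nat.eq_zero_or_pos n with rfl | hn
      · norm_num [zero_pow (by omega : 2*k ≠ 0)]
      · gcongr
        · exact Nat.one_le_cast.mpr hn
        · omega
    have hge : (0:ℝ) ≤ Z := by
      refine hasSum_le (fun n => ?_) hasSum_zero hz
      positivity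
    have hZ2 : |Z| ≤ 2 := by
      rw [abs_of_nonneg hge]
      nlinarith [pi_lt_d2, pi_pos]
    have hC : (0:ℝ) < (2:ℝ) ^ (2*k-1) * π ^ (2*k) := by positivity
    have habs : |Z| = (2:ℝ) ^ (2*k-1) * π ^ (2*k) *
        (|((bernoulli (2*k) : ℚ) : ℝ)| / ((2*k).factorial : ℝ)) := by
      rw [hZ, abs_div, abs_mul, abs_mul, abs_mul, abs_pow, abs_neg, abs_one, one_pow,
        one_mul, abs_of_nonneg (le_of_lt (by positivity : (0:ℝ) < (2:ℝ)^(2*k-1))),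
        abs_of_nonneg (by positivity : (0:ℝ) ≤ π^(2*k)),
        abs_of_nonneg (by positivity : (0:ℝ) ≤ ((2*k).factorial : ℝ)), mul_div_assoc]
    have h4 : (4:ℝ) / (2*π)^(2*k) = 2 / ((2:ℝ) ^ (2*k-1) * π ^ (2*k)) := by
      rw [mul_pow]
      rw [div_eq_div_iff (by positivity) (by positivity)]
      have : (2:ℝ) ^ (2*k) = 2 * (2:ℝ)^(2*k-1) := by
        rw [← pow_succ']
        congr 1
        omega
      rw [this]
      ring
    rw [h4, le_div_iff₀ hC, mul_comm, ← habs]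
    exact hZ2

theorem bernoulli_even_generating_function (x : ℝ) (hx : |x| < 2 * Real.pi) :
    HasSum (fun n : ℕ => (bernoulli (2 * n) : ℝ) * x ^ (2 * n) / (Nat.factorial (2 * n) : ℝ))
      (if x = 0 then 1 else x / 2 + x / (Real.exp x - 1)) := by
  by_cases h0 : x = 0
  · subst h0
    rw [if_pos rfl]
    have : ∀ n : ℕ, n ≠ 0 →
        (bernoulli (2 * n) : ℝ) * (0:ℝ) ^ (2 * n) / (Nat.factorial (2 * n) : ℝ) = 0 := by
      intro n hn
      rw [zero_pow (by omega : 2 * n ≠ 0)]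
      simp
    have h := hasSum_single (f := fun n : ℕ =>
      (bernoulli (2 * n) : ℝ) * (0:ℝ) ^ (2 * n) / (Nat.factorial (2 * n) : ℝ)) 0 this
    simpa using h
  · rw [if_neg h0]
    set r : ℝ := |x| / (2 * π) with hr_def
    have hπ : (0:ℝ) < 2 * π := by positivity
    have hr1 : r < 1 := (div_lt_one hπ).mpr hx
    have hr0 : 0 ≤ r := by positivity
    set F : ℕ → ℝ := fun n => ((bernoulli n : ℚ) : ℝ) * x ^ n / (n.factorial : ℝ) with hF_def
    have hFb : ∀ n, ‖F n‖ ≤ 4 * r ^ n := by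
      intro n
      have key : ∀ m : ℕ, |((bernoulli m : ℚ) : ℝ)| / (m.factorial : ℝ) ≤ 4 / (2*π)^m → ‖F m‖ ≤ 4 * r ^ m := by
        intro m hm
        have : ‖F m‖ = |((bernoulli m : ℚ) : ℝ)| / (m.factorial : ℝ) * |x| ^ m := by
          rw [hF_def]
          simp only [Real.norm_eq_abs, abs_div, abs_mul, abs_pow,
            abs_of_nonneg (by positivity : (0:ℝ) ≤ (m.factorial : ℝ))]
          ring
        rw [this, hr_def, div_pow]
        calc |((bernoulli m : ℚ) : ℝ)| / (m.factorial : ℝ) * |x| ^ m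
            ≤ 4 / (2*π)^m * |x| ^ m := by gcongr
          _ = 4 * (|x| ^ m / (2*π) ^ m) := by ring
      rcases Nat.even_or_odd n with ⟨k, hk⟩ | hodd
      · exact key n (by rw [hk, ← two_mul]; exact bern_div_fact_bound k)
      · rcases eq_or_ne n 1 with rfl | hn1
        · refine key 1 ?_
          have h1 : |((bernoulli 1 : ℚ) : ℝ)| / ((Nat.factorial 1 : ℕ) : ℝ) = 1/2 := by
            rw [bernoulli_one]; norm_num
          rw [h1, pow_one, le_div_iff₀ hπ]
          nlinarith [pi_le_four]
        · refine key n ?_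
          rw [bernoulli_eq_bernoulli'_of_ne_one hn1,
            bernoulli'_eq_zero_of_odd hodd (by rcases hodd with ⟨k, hk⟩; omega)]
          simp only [Rat.cast_zero, abs_zero, zero_div]
          positivity
    have hFnorm : Summable fun n => ‖F n‖ :=
      Summable.of_nonneg_of_le (fun n => norm_nonneg _) hFb
        ((summable_geometric_of_lt_one hr0 hr1).mul_left 4)
    have hFs : Summable F := hFnorm.of_norm
    set E : ℕ → ℝ := fun n => x ^ n / (n.factorial : ℝ) with hE_def
    have hE : HasSum E (Real.exp x) := by
      rw [Real.exp_eq_exp_ℝ]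
      exact NormedSpace.expSeries_div_hasSum_exp x
    have hEnorm : Summable fun n => ‖E n‖ := by
      have := Real.summable_pow_div_factorial |x|
      refine this.congr fun n => ?_
      rw [hE_def]
      simp [abs_div, abs_pow, Nat.abs_cast]
    -- Cauchy product
    have hcauchy : HasSum (fun n => ∑ k ∈ Finset.range (n+1), F k * E (n - k))
        ((∑' n, F n) * ∑' n, E n) := hasSum_sum_range_mul_of_summable_norm hFnorm hEnorm
    -- identify the Cauchy coefficients
    have hc : ∀ n, (∑ k ∈ Finset.range (n+1), F k * E (n - k))
        = F n + (if n = 1 then x else 0) := by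
      intro n
      have step1 : ∀ k ∈ Finset.range (n+1), F k * E (n - k)
          = x ^ n / (n.factorial : ℝ) * (((n.choose k : ℚ) * bernoulli k : ℚ) : ℝ) := by
        intro k hk
        have hkn : k ≤ n := by simpa using Nat.lt_succ_iff.mp (Finset.mem_range.mp hk)
        rw [hF_def, hE_def]
        have hxp : x ^ k * x ^ (n - k) = x ^ n := by
          rw [← pow_add]
          congr 1
          omega
        have hch : ((n.choose k : ℕ) : ℝ) = (n.factorial : ℝ) / ((k.factorial : ℝ) * ((n-k).factorial : ℝ)) := Nat.cast_choose ℝ hkn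
        push_cast
        rw [hch, div_mul_div_comm, mul_assoc, hxp]
        have hk0 : ((k.factorial : ℕ) : ℝ) ≠ 0 := Nat.cast_ne_zero.mpr k.factorial_ne_zero
        have hnk0 : (((n-k).factorial : ℕ) : ℝ) ≠ 0 := Nat.cast_ne_zero.mpr (n-k).factorial_ne_zero
        have hn0 : ((n.factorial : ℕ) : ℝ) ≠ 0 := Nat.cast_ne_zero.mpr n.factorial_ne_zero
        field_simp
      rw [Finset.sum_congr rfl step1, ← Finset.mul_sum]
      have hq : (∑ k ∈ Finset.range (n+1), ((n.choose k : ℚ) * bernoulli k)) =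
          (if n = 1 then (1:ℚ) else 0) + bernoulli n := by
        rw [Finset.sum_range_succ, sum_bernoulli n, Nat.choose_self]
        push_cast
        ring
      rw [← Rat.cast_sum, hq]
      rcases eq_or_ne n 1 with rfl | hn1
      · rw [if_pos rfl, if_pos rfl, hF_def]
        push_cast
        simp
        ring
      · rw [if_neg hn1, if_neg hn1, hF_def]
        push_cast
        ring
    have hdelta : HasSum (fun n : ℕ => if n = 1 then x else 0) x := hasSum_ite_eq 1 x
    have hsum2 : HasSum (fun n => F n + (if n = 1 then x else 0)) ((∑' n, F n) + x) :=
      hFs.hasSum.add hdelta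
    have hSx : (∑' n, F n) * Real.exp x = (∑' n, F n) + x := by
      have h1 := hcauchy
      rw [hE.tsum_eq] at h1
      have h2 : HasSum (fun n => ∑ k ∈ Finset.range (n+1), F k * E (n - k)) ((∑' n, F n) + x) := by
        exact hsum2.congr_fun fun n => hc n
      exact h1.unique h2
    have hexp1 : Real.exp x - 1 ≠ 0 := by
      intro h
      have : Real.exp x = Real.exp 0 := by rw [Real.exp_zero]; linarith [sub_eq_zero.mp h]
      exact h0 (Real.exp_eq_exp.mp this)
    have hS : (∑' n, F n) = x / (Real.exp x - 1) := by
      rw [eq_div_iff hexp1]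
      linarith [hSx, (by ring : (∑' n, F n) * (Real.exp x - 1) = (∑' n, F n) * Real.exp x - (∑' n, F n))]
    -- even part
    set G : ℕ → ℝ := fun n => F n + (if n = 1 then x/2 else 0) with hG_def
    have hG : HasSum G ((∑' n, F n) + x/2) := hFs.hasSum.add (hasSum_ite_eq 1 (x/2))
    have hinj : Function.Injective (fun k : ℕ => 2 * k) := fun a b h => Nat.eq_of_mul_eq_mul_left two_pos h
    have hvanish : ∀ m, m ∉ Set.range (fun k : ℕ => 2 * k) → G m = 0 := by
      intro m hm
      have hodd : Odd m := by
        rcases Nat.even_or_odd m with ⟨k, hk⟩ | h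
        · exact absurd ⟨k, by show 2*k = m; omega⟩ hm
        · exact h
      rcases eq_or_ne m 1 with rfl | hm1
      · rw [hG_def]
        simp only [if_pos rfl, hF_def, bernoulli_one, Nat.factorial_one]
        push_cast
        ring
      · rw [hG_def]
        simp only [if_neg hm1, add_zero, hF_def]
        rw [bernoulli_eq_bernoulli'_of_ne_one hm1,
          bernoulli'_eq_zero_of_odd hodd (by rcases hodd with ⟨k, hk⟩; omega)]
        push_cast
        ring
    have hfinal : HasSum (G ∘ fun k : ℕ => 2 * k) ((∑' n, F n) + x/2) :=
      (hinj.hasSum_iff hvanish).mpr hG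
    have heq : (fun n : ℕ => (bernoulli (2 * n) : ℝ) * x ^ (2 * n) / (Nat.factorial (2 * n) : ℝ))
        = (G ∘ fun k : ℕ => 2 * k) := by
      funext n
      simp only [Function.comp_apply, hG_def, hF_def]
      rw [if_neg (by omega : 2 * n ≠ 1), add_zero]
    rw [hS] at hfinal
    rw [heq]
    convert hfinal using 1
    ring
end

section
/- (Wilcox's formula) For a differentiable matrix-valued function X : ℝ → ℝ^{d×d}, the derivative of the matrix exponential satisfies d/dt e^{X(t)} = ∫_0^1 e^{(1-α)X(t)} X'(t) e^{αX(t)} dα. -/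
open Matrix NormedSpace

attribute [local instance] Matrix.linftyOpNormedRing Matrix.linftyOpNormedAlgebra

lemma wilcox_key {d : ℕ} (A B : Matrix (Fin d) (Fin d) ℝ) :
    NormedSpace.exp A - NormedSpace.exp B =
      ∫ α in (0:ℝ)..1, NormedSpace.exp ((1 - α) • B) * (A - B) * NormedSpace.exp (α • A) := by
  have hderiv : ∀ α ∈ Set.uIcc (0:ℝ) 1,
      HasDerivAt (fun α : ℝ => NormedSpace.exp ((1 - α) • B) * NormedSpace.exp (α • A))
        (NormedSpace.exp ((1 - α) • B) * (A - B) * NormedSpace.exp (α • A)) α := by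
    intro α _
    have hb : HasDerivAt (fun α : ℝ => 1 - α) (-1) α := by
      simpa using (hasDerivAt_id α).const_sub 1
    have h1 : HasDerivAt (fun α : ℝ => NormedSpace.exp ((1 - α) • B))
        ((-1 : ℝ) • (B * NormedSpace.exp ((1 - α) • B))) α :=
      (hasDerivAt_exp_smul_const' B (1 - α)).scomp α hb
    have h2 : HasDerivAt (fun α : ℝ => NormedSpace.exp (α • A)) (A * NormedSpace.exp (α • A)) α :=
      hasDerivAt_exp_smul_const' A α
    have h := h1.mul h2
    refine h.congr_deriv ?_
    have hc : B * NormedSpace.exp ((1 - α) • B) = NormedSpace.exp ((1 - α) • B) * B :=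
      (((Commute.refl B).smul_right (1 - α)).exp_right).eq
    rw [hc]
    simp only [neg_one_smul]
    noncomm_ring
  have hint : @IntervalIntegrable _ PseudoMetricSpace.toUniformSpace.toTopologicalSpace _
      (fun α : ℝ => NormedSpace.exp ((1 - α) • B) * (A - B) * NormedSpace.exp (α • A)) MeasureTheory.volume 0 1 := by
    apply Continuous.intervalIntegrable
    exact ((exp_continuous.comp ((continuous_const.sub continuous_id).smul
      continuous_const)).mul continuous_const).mul
      (exp_continuous.comp (continuous_id.smul continuous_const))
  have := intervalIntegral.integral_eq_sub_of_hasDerivAt hderiv hint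
  rw [this]
  simp [exp_zero]

theorem wilcox_formula {d : ℕ} (X X' : ℝ → Matrix (Fin d) (Fin d) ℝ)
    (hX : ∀ t, HasDerivAt X (X' t) t) (hX' : Continuous X') (t : ℝ) :
    HasDerivAt (fun s => NormedSpace.exp (X s))
      (∫ α in (0:ℝ)..1, NormedSpace.exp ((1 - α) • X t) * X' t * NormedSpace.exp (α • X t)) t := by
  refine hasDerivAt_iff_tendsto_slope.mpr ?_
  set F : ℝ → ℝ → Matrix (Fin d) (Fin d) ℝ := fun s α =>
    NormedSpace.exp ((1 - α) • X t) * ((s - t)⁻¹ • (X s - X t)) * NormedSpace.exp (α • X s) with hF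
  have hslopeX : Filter.Tendsto (slope X t) (nhdsWithin t {t}ᶜ) (nhds (X' t)) :=
    hasDerivAt_iff_tendsto_slope.mp (hX t)
  have hXc : Continuous X := continuous_iff_continuousAt.mpr fun s => (hX s).continuousAt
  have c1 : Continuous fun α : ℝ => NormedSpace.exp ((1 - α) • X t) :=
    exp_continuous.comp ((continuous_const.sub continuous_id).smul continuous_const)
  -- slope of exp ∘ X equals the integral of F s
  have heq : ∀ s ∈ ({t}ᶜ : Set ℝ),
      slope (fun s => NormedSpace.exp (X s)) t s = ∫ α in (0:ℝ)..1, F s α := by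
    intro s hs
    rw [slope_def_module, wilcox_key (X s) (X t), ← intervalIntegral.integral_smul]
    refine intervalIntegral.integral_congr fun α _ => ?_
    simp only [hF]
    rw [mul_smul_comm, smul_mul_assoc]
  -- the limit of the integrals
  have key : Filter.Tendsto (fun s => ∫ α in (0:ℝ)..1, F s α) (nhdsWithin t {t}ᶜ)
      (nhds (∫ α in (0:ℝ)..1, NormedSpace.exp ((1 - α) • X t) * X' t * NormedSpace.exp (α • X t))) := by
    -- bounds
    obtain ⟨C1, hC1⟩ := (isCompact_Icc (a := (0:ℝ)) (b := 1)).exists_bound_of_continuousOn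
      (f := fun α => NormedSpace.exp ((1 - α) • X t)) c1.continuousOn
    obtain ⟨C2, hC2⟩ := (IsCompact.prod (isCompact_Icc (a := t - 1) (b := t + 1))
      (isCompact_Icc (a := (0:ℝ)) (b := 1))).exists_bound_of_continuousOn
      (f := fun p : ℝ × ℝ => NormedSpace.exp (p.2 • X p.1))
      (exp_continuous.comp (continuous_snd.smul (hXc.comp continuous_fst))).continuousOn
    have hC1' : 0 ≤ C1 := le_trans (norm_nonneg _) (hC1 0 (by norm_num))
    have hC2' : 0 ≤ C2 := le_trans (norm_nonneg _)
      (hC2 (t, 0) (by constructor <;> constructor <;> norm_num))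
    apply intervalIntegral.tendsto_integral_filter_of_dominated_convergence
      (bound := fun _ => C1 * (‖X' t‖ + 1) * C2)
    · filter_upwards with s
      apply Continuous.aestronglyMeasurable
      exact (c1.mul continuous_const).mul
        (exp_continuous.comp (continuous_id.smul continuous_const))
    · have h1 : ∀ᶠ s in nhdsWithin t {t}ᶜ, ‖slope X t s‖ ≤ ‖X' t‖ + 1 := by
        have := hslopeX.norm.eventually_le_const (by linarith : ‖X' t‖ < ‖X' t‖ + 1)
        filter_upwards [this] with s h using h
      have h2 : ∀ᶠ s in nhdsWithin t {t}ᶜ, s ∈ Set.Icc (t - 1) (t + 1) := by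
        apply Filter.eventually_iff_exists_mem.mpr
        exact ⟨Set.Icc (t - 1) (t + 1), nhdsWithin_le_nhds
          (Icc_mem_nhds (by linarith) (by linarith)), fun s hs => hs⟩
      filter_upwards [h1, h2] with s hs1 hs2
      filter_upwards with α hα
      have hα' : α ∈ Set.Icc (0:ℝ) 1 := by
        rw [Set.uIoc_of_le (by norm_num : (0:ℝ) ≤ 1)] at hα
        exact ⟨hα.1.le, hα.2⟩
      have hn : ‖F s α‖ ≤ ‖NormedSpace.exp ((1 - α) • X t)‖ * ‖(s - t)⁻¹ • (X s - X t)‖ *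
          ‖NormedSpace.exp (α • X s)‖ :=
        le_trans (norm_mul_le _ _) (by gcongr; exact norm_mul_le _ _)
      refine le_trans hn ?_
      have e1 := hC1 α hα'
      have e2 := hC2 (s, α) ⟨hs2, hα'⟩
      have e3 : ‖(s - t)⁻¹ • (X s - X t)‖ ≤ ‖X' t‖ + 1 := by
        simpa [slope_def_module] using hs1
      exact mul_le_mul (mul_le_mul e1 e3 (norm_nonneg _) hC1') e2 (norm_nonneg _)
        (by positivity)
    · exact intervalIntegrable_const
    · filter_upwards with α hα
      have t1 : Filter.Tendsto (fun s => (s - t)⁻¹ • (X s - X t)) (nhdsWithin t {t}ᶜ)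
          (nhds (X' t)) := by
        apply hslopeX.congr
        intro s; rw [slope_def_module]
      have t2 : Filter.Tendsto (fun s => NormedSpace.exp (α • X s)) (nhdsWithin t {t}ᶜ)
          (nhds (NormedSpace.exp (α • X t))) := by
        have : Continuous fun s => NormedSpace.exp (α • X s) :=
          exp_continuous.comp (hXc.const_smul α)
        exact (this.tendsto t).mono_left nhdsWithin_le_nhds
      exact ((tendsto_const_nhds.mul t1).mul t2)
  exact key.congr' (by filter_upwards [self_mem_nhdsWithin] with s hs using (heq s hs).symm)
end

section
/- For X, Y ∈ ℝ^{d×d}, the identity ∫_0^1 e^{(1-α)X} Y e^{αX} dα = (∑_{n=0}^∞ {X,Y}_n / (n+1)!) · e^X holds, where {X,Y}_n denotes the n-fold iterated commutator. -/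
open Matrix NormedSpace

attribute [local instance] Matrix.linftyOpNormedRing Matrix.linftyOpNormedAlgebra

/-- The iterated commutator `{X,Y}ₙ`. -/
def itComm {d : ℕ} (X : Matrix (Fin d) (Fin d) ℝ) : Matrix (Fin d) (Fin d) ℝ → ℕ →
    Matrix (Fin d) (Fin d) ℝ
  | Y, 0 => Y
  | Y, n + 1 => X * itComm X Y n - itComm X Y n * X

lemma itComm_eq_pow_apply {d : ℕ} (X Y : Matrix (Fin d) (Fin d) ℝ) (n : ℕ) :
    itComm X Y n = ((LinearMap.mulLeft ℝ X - LinearMap.mulRight ℝ X) ^ n) Y := by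
  induction n with
  | zero => simp [itComm]
  | succ n ih =>
    rw [pow_succ']
    simp [itComm, Module.End.mul_apply, LinearMap.sub_apply, ih]

lemma norm_itComm_le {d : ℕ} (X Y : Matrix (Fin d) (Fin d) ℝ) (n : ℕ) :
    ‖itComm X Y n‖ ≤ (2 * ‖X‖) ^ n * ‖Y‖ := by
  induction n with
  | zero => simp [itComm]
  | succ n ih =>
    have h1 : ‖itComm X Y (n+1)‖ ≤ 2 * ‖X‖ * ‖itComm X Y n‖ := by
      calc ‖X * itComm X Y n - itComm X Y n * X‖
          ≤ ‖X * itComm X Y n‖ + ‖itComm X Y n * X‖ := norm_sub_le _ _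
        _ ≤ ‖X‖ * ‖itComm X Y n‖ + ‖itComm X Y n‖ * ‖X‖ :=
            add_le_add (norm_mul_le _ _) (norm_mul_le _ _)
        _ = 2 * ‖X‖ * ‖itComm X Y n‖ := by ring
    calc ‖itComm X Y (n+1)‖ ≤ 2 * ‖X‖ * ‖itComm X Y n‖ := h1
      _ ≤ 2 * ‖X‖ * ((2 * ‖X‖) ^ n * ‖Y‖) := by
          apply mul_le_mul_of_nonneg_left ih (by positivity)
      _ = (2 * ‖X‖) ^ (n+1) * ‖Y‖ := by ring

lemma binom_pow_mul {d : ℕ} (X Y : Matrix (Fin d) (Fin d) ℝ) (n : ℕ) :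
    X ^ n * Y = ∑ kl ∈ Finset.HasAntidiagonal.antidiagonal n,
      n.choose kl.1 • (itComm X Y kl.1 * X ^ kl.2) := by
  set L := LinearMap.mulLeft ℝ X with hLdef
  set R := LinearMap.mulRight ℝ X with hRdef
  have hLR : Commute L R := by
    ext m
    simp [hLdef, hRdef, Module.End.mul_apply, mul_assoc]
  have hAR : Commute (L - R) R := hLR.sub_left (Commute.refl R)
  have hL : L = (L - R) + R := by abel
  have h1 : X ^ n * Y = (L ^ n) Y := by
    rw [hLdef, LinearMap.pow_mulLeft, LinearMap.mulLeft_apply]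
  rw [h1]
  conv_lhs => rw [hL, hAR.add_pow']
  rw [LinearMap.sum_apply]
  refine Finset.sum_congr rfl fun kl _ => ?_
  rw [(hAR.pow_pow kl.1 kl.2).eq]
  simp only [LinearMap.smul_apply, Module.End.mul_apply]
  rw [itComm_eq_pow_apply]
  congr 1
  rw [hRdef, LinearMap.pow_mulRight, LinearMap.mulRight_apply]

set_option maxHeartbeats 1000000 in
lemma summable_norm_coeff_itComm {d : ℕ} (X Y : Matrix (Fin d) (Fin d) ℝ) (s : ℝ) :
    Summable fun k : ℕ => ‖(((k.factorial : ℝ))⁻¹ * s ^ k) • itComm X Y k‖ := by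
  refine Summable.of_nonneg_of_le (fun k => norm_nonneg _) (fun k => ?_)
    ((Real.summable_pow_div_factorial (|s| * (2 * ‖X‖))).mul_right ‖Y‖)
  · 
    rw [norm_smul]
    calc ‖((k.factorial : ℝ))⁻¹ * s ^ k‖ * ‖itComm X Y k‖
        ≤ ((k.factorial : ℝ))⁻¹ * |s| ^ k * ((2 * ‖X‖) ^ k * ‖Y‖) := by
          apply mul_le_mul _ (norm_itComm_le X Y k) (norm_nonneg _) (by positivity)
          rw [Real.norm_eq_abs, abs_mul, abs_pow, abs_inv, abs_of_nonneg (by positivity)]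
      _ = (|s| * (2 * ‖X‖)) ^ k / k.factorial * ‖Y‖ := by
          rw [mul_pow]; ring

lemma summable_norm_coeff_pow {d : ℕ} (X : Matrix (Fin d) (Fin d) ℝ) (s : ℝ) :
    Summable fun k : ℕ => ‖(((k.factorial : ℝ))⁻¹ * s ^ k) • X ^ k‖ := by
  refine (norm_expSeries_summable' (𝕂 := ℝ) (s • X)).congr fun k => ?_
  rw [smul_pow, smul_smul]

lemma key_conj {d : ℕ} (X Y : Matrix (Fin d) (Fin d) ℝ) (s : ℝ) :
    NormedSpace.exp (s • X) * Y =
      (∑' k : ℕ, (((k.factorial : ℝ))⁻¹ * s ^ k) • itComm X Y k) * NormedSpace.exp (s • X) := by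
  have hexp : NormedSpace.exp (s • X) = ∑' k : ℕ, (((k.factorial : ℝ))⁻¹ * s ^ k) • X ^ k := by
    rw [exp_eq_tsum (𝕂 := ℝ)]
    refine tsum_congr fun k => ?_
    rw [smul_pow, smul_smul]
  have hf := summable_norm_coeff_itComm X Y s
  have hg := summable_norm_coeff_pow X s
  erw [hexp, tsum_mul_tsum_eq_tsum_sum_antidiagonal_of_summable_norm hf hg]
  have hterm : ∀ n : ℕ, (∑ kl ∈ Finset.HasAntidiagonal.antidiagonal n,
      ((((kl.1.factorial : ℝ))⁻¹ * s ^ kl.1) • itComm X Y kl.1) *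
        ((((kl.2.factorial : ℝ))⁻¹ * s ^ kl.2) • X ^ kl.2)) =
      (((n.factorial : ℝ))⁻¹ * s ^ n) • (X ^ n * Y) := by
    intro n
    rw [binom_pow_mul, Finset.smul_sum]
    refine Finset.sum_congr rfl fun kl hkl => ?_
    rw [Finset.HasAntidiagonal.mem_antidiagonal] at hkl
    rw [smul_mul_smul_comm, ← Nat.cast_smul_eq_nsmul ℝ, smul_smul]
    congr 1
    have h1 : kl.1 ≤ n := by omega
    have h2 : n - kl.1 = kl.2 := by omega
    have := Nat.choose_mul_factorial_mul_factorial h1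
    rw [h2] at this
    have hs : s ^ kl.1 * s ^ kl.2 = s ^ n := by rw [← pow_add, hkl]
    field_simp
    rw [← hs]
    push_cast [← this]
    ring
  erw [tsum_congr hterm]
  have hsum : Summable fun n : ℕ => (((n.factorial : ℝ))⁻¹ * s ^ n) • X ^ n :=
    (summable_norm_coeff_pow X s).of_norm
  calc (∑' n : ℕ, (((n.factorial : ℝ))⁻¹ * s ^ n) • X ^ n) * Y
      = ∑' n : ℕ, ((((n.factorial : ℝ))⁻¹ * s ^ n) • X ^ n) * Y := (hsum.tsum_mul_right Y).symm
    _ = ∑' n : ℕ, (((n.factorial : ℝ))⁻¹ * s ^ n) • (X ^ n * Y) := by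
        refine tsum_congr fun n => ?_
        rw [smul_mul_assoc]

open MeasureTheory

theorem integral_conj_exp_eq_series {d : ℕ} (X Y : Matrix (Fin d) (Fin d) ℝ) :
    ∫ α in (0:ℝ)..1, NormedSpace.exp ((1 - α) • X) * Y * NormedSpace.exp (α • X) =
      (∑' n : ℕ, ((Nat.factorial (n + 1) : ℝ))⁻¹ • itComm X Y n) * NormedSpace.exp X := by
  set S : ℝ → Matrix (Fin d) (Fin d) ℝ :=
    fun α => ∑' k : ℕ, (((k.factorial : ℝ))⁻¹ * (1 - α) ^ k) • itComm X Y k with hSdef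
  have hsplit : ∀ α : ℝ, NormedSpace.exp ((1 - α) • X) * NormedSpace.exp (α • X) = NormedSpace.exp X := by
    intro α
    have hc : Commute ((1 - α) • X) (α • X) :=
      ((Commute.refl X).smul_left _).smul_right _
    erw [← exp_add_of_commute hc, ← add_smul]
    norm_num
    rfl
  have integrand_eq : ∀ α : ℝ,
      NormedSpace.exp ((1 - α) • X) * Y * NormedSpace.exp (α • X) = S α * NormedSpace.exp X := by
    intro α
    rw [key_conj X Y (1 - α), mul_assoc, hsplit α]
  have hexpinv : NormedSpace.exp X * NormedSpace.exp (-X) = 1 := by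
    erw [← exp_add_of_commute (Commute.neg_right (Commute.refl X)), add_neg_cancel, exp_zero]
  have hSalt : ∀ α : ℝ, S α = (NormedSpace.exp ((1 - α) • X) * Y * NormedSpace.exp (α • X)) * NormedSpace.exp (-X) := by
    intro α
    rw [integrand_eq α, mul_assoc, hexpinv, mul_one]
  have hScont : Continuous S := by
    have h1 : Continuous fun α : ℝ => NormedSpace.exp ((1 - α) • X) :=
      exp_continuous.comp ((continuous_const.sub continuous_id).smul continuous_const)
    have h2 : Continuous fun α : ℝ => NormedSpace.exp (α • X) :=
      exp_continuous.comp (continuous_id.smul continuous_const)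
    have : Continuous fun α : ℝ =>
        (NormedSpace.exp ((1 - α) • X) * Y * NormedSpace.exp (α • X)) * NormedSpace.exp (-X) :=
      (((h1.mul continuous_const).mul h2).mul continuous_const)
    exact (funext hSalt : S = _) ▸ this
  calc ∫ α in (0:ℝ)..1, NormedSpace.exp ((1 - α) • X) * Y * NormedSpace.exp (α • X)
      = ∫ α in (0:ℝ)..1, S α * NormedSpace.exp X := by
        exact intervalIntegral.integral_congr fun α _ => integrand_eq α
    _ = (∫ α in (0:ℝ)..1, S α) * NormedSpace.exp X := by
        have := ((ContinuousLinearMap.mul ℝ (Matrix (Fin d) (Fin d) ℝ)).flip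
          (NormedSpace.exp X)).intervalIntegral_comp_comm (hScont.intervalIntegrable (μ := volume) 0 1)
        simpa [ContinuousLinearMap.flip_apply, ContinuousLinearMap.mul_apply'] using this
    _ = (∑' n : ℕ, ((Nat.factorial (n + 1) : ℝ))⁻¹ • itComm X Y n) * NormedSpace.exp X := by
        congr 1
        rw [intervalIntegral.integral_of_le zero_le_one]
        letI : ContinuousENorm (Matrix (Fin d) (Fin d) ℝ) := SeminormedAddGroup.toContinuousENorm
        have hInt : ∀ n : ℕ, Integrable
            (fun α : ℝ => (((n.factorial : ℝ))⁻¹ * (1 - α) ^ n) • itComm X Y n)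
            (volume.restrict (Set.Ioc (0:ℝ) 1)) := by
          intro n
          have hc : Continuous fun α : ℝ => ((n.factorial : ℝ))⁻¹ * (1 - α) ^ n :=
            continuous_const.mul ((continuous_const.sub continuous_id).pow n)
          exact (hc.smul continuous_const).integrableOn_Ioc
        have hSum : Summable fun n : ℕ =>
            ∫ α in Set.Ioc (0:ℝ) 1,
              ‖(((n.factorial : ℝ))⁻¹ * (1 - α) ^ n) • itComm X Y n‖ := by
          refine Summable.of_nonneg_of_le
            (fun n => integral_nonneg fun α => norm_nonneg _) (fun n => ?_)
            ((Real.summable_pow_div_factorial (2 * ‖X‖)).mul_right ‖Y‖)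
          calc (∫ α in Set.Ioc (0:ℝ) 1,
                ‖(((n.factorial : ℝ))⁻¹ * (1 - α) ^ n) • itComm X Y n‖)
              ≤ ∫ _α in Set.Ioc (0:ℝ) 1,
                  ((n.factorial : ℝ))⁻¹ * ((2 * ‖X‖) ^ n * ‖Y‖) := by
                refine setIntegral_mono_on ((hInt n).norm)
                  (integrableOn_const (by simp)) measurableSet_Ioc ?_
                intro α hα
                rw [norm_smul]
                have hb : 0 ≤ 1 - α := by linarith [hα.2]
                have hb1 : 1 - α ≤ 1 := by linarith [hα.1]
                have hc : ‖((n.factorial : ℝ))⁻¹ * (1 - α) ^ n‖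
                    ≤ ((n.factorial : ℝ))⁻¹ := by
                  rw [Real.norm_eq_abs, abs_mul, abs_of_nonneg (by positivity),
                    abs_of_nonneg (by positivity)]
                  calc ((n.factorial : ℝ))⁻¹ * (1 - α) ^ n
                      ≤ ((n.factorial : ℝ))⁻¹ * 1 := by
                        refine mul_le_mul_of_nonneg_left ?_ (by positivity)
                        exact pow_le_one₀ hb hb1
                    _ = ((n.factorial : ℝ))⁻¹ := mul_one _
                exact mul_le_mul hc (norm_itComm_le X Y n) (norm_nonneg _) (by positivity)
            _ = (2 * ‖X‖) ^ n / n.factorial * ‖Y‖ := by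
                rw [setIntegral_const]
                simp [Real.volume_Ioc]
                ring
        erw [← integral_tsum_of_summable_integral_norm hInt hSum]
        refine tsum_congr fun n => ?_
        rw [← intervalIntegral.integral_of_le zero_le_one,
          intervalIntegral.integral_smul_const, intervalIntegral.integral_const_mul]
        have h1 : (∫ α in (0:ℝ)..1, (1 - α) ^ n) = ((n:ℝ) + 1)⁻¹ := by
          rw [show (fun α : ℝ => (1 - α) ^ n) = fun α : ℝ => (fun x : ℝ => x ^ n) (1 - α)
            from rfl, intervalIntegral.integral_comp_sub_left (fun x : ℝ => x ^ n) 1]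
          norm_num [integral_pow]
        rw [h1]
        congr 1
        rw [Nat.factorial_succ]
        push_cast
        rw [mul_inv]
        ring
end
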